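/- Fix a β-sequence [·]_β. Let (P_n)_{n≥0} be an admissible polynomial sequence with lowering operator A and β-generating function H(x,z) = Σ_{n≥0} (1/[n]_β!) P_n(x) z^n. Suppose there exists u ∈ 𝒫₀,₁, u(z) = Σ_{k≥1} u_k z^k, such that H(x,z) = exp_β(u(z)x), i.e. Σ_{n≥0} (1/[n]_β!) P_n(x) z^n = Σ_{k≥0} (1/[k]_β!) x^k u(z)^k in ℂ[x][[z]]. Then for every polynomial p ∈ ℂ[x], D_β p = Σ_{k≥1} u_k A^k p (a finite sum, since A strictly lowers degree); that is, u(A) = D_β as operators on ℂ[x]. -/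

import Mathlib

/-- The β-factorial `[n]_β! = ∏_{i=1}^n [i]_β`. -/
noncomputable def betaFact (β : ℕ → ℝ) (n : ℕ) : ℝ := ∏ i ∈ Finset.range n, β (i + 1)

/-- if the β-generating function of an admissible polynomial sequence has the
form `exp_β(u(z)x)` with `u ∈ 𝒫₀,₁`, then `u(A) = D_β` as operators on `ℂ[x]`, where `A` is
the lowering operator of the sequence. -/
theorem stmt_10 (β : ℕ → ℝ) (hβ0 : β 0 = 0) (hβ1 : β 1 = 1) (hβpos : ∀ n, 1 ≤ n → 0 < β n)
    (P : ℕ → Polynomial ℂ)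
    (hmonic : ∀ n, (P n).Monic) (hdeg : ∀ n, (P n).natDegree = n)
    (hzero : ∀ n, 1 ≤ n → (P n).coeff 0 = 0)
    (D A : Module.End ℂ (Polynomial ℂ))
    (hD : ∀ n : ℕ, D (Polynomial.X ^ n) = ((β n : ℂ)) • Polynomial.X ^ (n - 1))
    (hA : ∀ n : ℕ, A (P n) = ((β n : ℂ)) • P (n - 1))
    (u : PowerSeries ℂ)
    (hu0 : PowerSeries.constantCoeff u = 0) (hu1 : PowerSeries.coeff 1 u = 1)
    (hgen : ∀ n : ℕ, ((betaFact β n : ℂ))⁻¹ • P n =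
      ∑ k ∈ Finset.range (n + 1),
        ((betaFact β k : ℂ))⁻¹ •
          (Polynomial.C (PowerSeries.coeff n (u ^ k)) * Polynomial.X ^ k)) :
    ∀ p : Polynomial ℂ, D p = ∑ k ∈ Finset.range (p.natDegree + 1),
      (PowerSeries.coeff (k + 1) u) • ((A ^ (k + 1)) p) := by
  classical
  set F : ℕ → ℂ := fun n => ((betaFact β n : ℝ) : ℂ) with hF
  set c : ℕ → ℕ → ℂ := fun n k => PowerSeries.coeff n (u ^ k) with hc
  have hβc : ∀ n, 1 ≤ n → ((β n : ℝ) : ℂ) ≠ 0 := by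
    intro n hn
    exact_mod_cast (hβpos n hn).ne'
  have hFne : ∀ n, F n ≠ 0 := by
    intro n
    have h : 0 < betaFact β n := by
      apply Finset.prod_pos
      intro i _
      exact hβpos (i + 1) (by omega)
    simp only [hF]
    exact_mod_cast h.ne'
  have hFsucc : ∀ n, F (n + 1) = F n * ((β (n + 1) : ℝ) : ℂ) := by
    intro n
    simp only [hF, betaFact, Finset.prod_range_succ]
    push_cast
    ring
  have hFinv : ∀ i, (F (i + 1))⁻¹ * ((β (i + 1) : ℝ) : ℂ) = (F i)⁻¹ := by
    intro i
    rw [hFsucc, mul_inv, mul_assoc, inv_mul_cancel₀ (hβc (i + 1) (by omega)), mul_one]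
  -- explicit expansion of P n
  have hPexp : ∀ n, P n = ∑ k ∈ Finset.range (n + 1),
      (F n * (F k)⁻¹ * c n k) • (Polynomial.X : Polynomial ℂ) ^ k := by
    intro n
    have h := hgen n
    have h2 : F n • ((F n)⁻¹ • P n) = F n • ∑ k ∈ Finset.range (n + 1),
        (F k)⁻¹ • (Polynomial.C (c n k) * Polynomial.X ^ k) := by rw [h]
    rw [smul_smul, mul_inv_cancel₀ (hFne n), one_smul] at h2
    rw [h2, Finset.smul_sum]
    refine Finset.sum_congr rfl fun k _ => ?_
    rw [← Polynomial.smul_eq_C_mul, smul_smul, smul_smul, mul_assoc]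
  -- order lemma
  have hord : ∀ j N, N < j → c N j = 0 := by
    intro j N h
    have hx : PowerSeries.X ∣ u := PowerSeries.X_dvd_iff.mpr hu0
    have hxj : PowerSeries.X ^ j ∣ u ^ j := pow_dvd_pow_of_dvd hx j
    exact (PowerSeries.X_pow_dvd_iff.mp hxj) N h
  -- convolution identity
  have hconv : ∀ n j, c n (j + 1) =
      ∑ k ∈ Finset.range (n - j), PowerSeries.coeff (k + 1) u * c (n - (k + 1)) j := by
    intro n j
    have : c n (j + 1) = ∑ m ∈ Finset.range (n + 1),
        PowerSeries.coeff m u * c (n - m) j := by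
      simp only [hc]
      rw [pow_succ', PowerSeries.coeff_mul,
        Finset.Nat.sum_antidiagonal_eq_sum_range_succ_mk]
    rw [this, Finset.sum_range_succ']
    have h0 : PowerSeries.coeff 0 u * c (n - 0) j = 0 := by
      simp [PowerSeries.coeff_zero_eq_constantCoeff, hu0]
    rw [h0, add_zero]
    refine (Finset.sum_subset ?_ ?_).symm
    · exact Finset.range_subset_range.mpr (by omega)
    · intro k hk hk2
      simp only [Finset.mem_range] at hk hk2
      have : n - (k + 1) < j := by omega
      rw [hord j _ this, mul_zero]
  -- powers of A on P n
  have hApow : ∀ m n, m ≤ n → (A ^ m) (P n) = (F n * (F (n - m))⁻¹) • P (n - m) := by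
    intro m
    induction m with
    | zero =>
      intro n _
      simp [mul_inv_cancel₀ (hFne n)]
    | succ m ih =>
      intro n hmn
      have hn1 : 1 ≤ n := by omega
      rw [pow_succ, Module.End.mul_apply, hA n, map_smul, ih (n - 1) (by omega), smul_smul]
      have hidx : n - 1 - m = n - (m + 1) := by omega
      rw [hidx]
      congr 1
      have hFn : F n = F (n - 1) * ((β n : ℝ) : ℂ) := by
        have := hFsucc (n - 1)
        rwa [Nat.sub_add_cancel hn1] at this
      rw [hFn]; ring
  have hApow0 : ∀ m n, n < m → (A ^ m) (P n) = 0 := by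
    intro m n h
    have h1 : (A ^ (n + 1)) (P n) = 0 := by
      rw [pow_succ', Module.End.mul_apply, hApow n n le_rfl, map_smul, Nat.sub_self, hA 0]
      simp [hβ0]
    obtain ⟨k, rfl⟩ : ∃ k, m = k + (n + 1) := ⟨m - (n + 1), by omega⟩
    rw [pow_add, Module.End.mul_apply, h1, map_zero]
  -- key identity on basis
  have key : ∀ n N, n ≤ N → D (P n) = ∑ k ∈ Finset.range N,
      (PowerSeries.coeff (k + 1) u) • ((A ^ (k + 1)) (P n)) := by
    intro n N hnN
    have hL : D (P n) = ∑ j ∈ Finset.range n,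
        (F n * (F j)⁻¹ * c n (j + 1)) • (Polynomial.X : Polynomial ℂ) ^ j := by
      rw [hPexp n, map_sum]
      have hterm : ∀ k, D ((F n * (F k)⁻¹ * c n k) • (Polynomial.X : Polynomial ℂ) ^ k)
          = (F n * (F k)⁻¹ * c n k * ((β k : ℝ) : ℂ)) • (Polynomial.X : Polynomial ℂ) ^ (k - 1) := by
        intro k
        rw [map_smul, hD k, smul_smul]
      simp only [hterm]
      rw [Finset.sum_range_succ']
      have h0 : (F n * (F 0)⁻¹ * c n 0 * ((β 0 : ℝ) : ℂ)) •
          (Polynomial.X : Polynomial ℂ) ^ (0 - 1) = 0 := by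
        rw [hβ0]; push_cast; rw [mul_zero, zero_smul]
      rw [h0, add_zero]
      refine Finset.sum_congr rfl fun j _ => ?_
      have hsc : F n * (F (j + 1))⁻¹ * c n (j + 1) * ((β (j + 1) : ℝ) : ℂ)
          = F n * (F j)⁻¹ * c n (j + 1) := by
        rw [show F n * (F (j + 1))⁻¹ * c n (j + 1) * ((β (j + 1) : ℝ) : ℂ)
            = F n * ((F (j + 1))⁻¹ * ((β (j + 1) : ℝ) : ℂ)) * c n (j + 1) by ring, hFinv]
      rw [hsc]
      norm_num
    rw [hL]
    -- now compute RHS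
    have hsub : ∑ k ∈ Finset.range N, (PowerSeries.coeff (k + 1) u) • ((A ^ (k + 1)) (P n))
        = ∑ k ∈ Finset.range n, (PowerSeries.coeff (k + 1) u) • ((A ^ (k + 1)) (P n)) := by
      refine (Finset.sum_subset (Finset.range_subset_range.mpr hnN) ?_).symm
      intro k hk hk2
      simp only [Finset.mem_range] at hk hk2
      rw [hApow0 (k + 1) n (by omega), smul_zero]
    rw [hsub]
    have hterm2 : ∀ k ∈ Finset.range n,
        (PowerSeries.coeff (k + 1) u) • ((A ^ (k + 1)) (P n))
        = ∑ j ∈ Finset.range (n - k),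
            (F n * (F j)⁻¹ * (PowerSeries.coeff (k + 1) u * c (n - (k + 1)) j)) •
              (Polynomial.X : Polynomial ℂ) ^ j := by
      intro k hk
      simp only [Finset.mem_range] at hk
      rw [hApow (k + 1) n (by omega), hPexp (n - (k + 1)),
        show n - (k + 1) + 1 = n - k by omega, Finset.smul_sum, Finset.smul_sum]
      refine Finset.sum_congr rfl fun j _ => ?_
      rw [smul_smul, smul_smul]
      congr 1
      have hm : (F (n - (k + 1)))⁻¹ * F (n - (k + 1)) = 1 := inv_mul_cancel₀ (hFne _)
      linear_combination
        (PowerSeries.coeff (k + 1) u * F n * (F j)⁻¹ * c (n - (k + 1)) j) * hm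
    rw [Finset.sum_congr rfl hterm2]
    rw [Finset.sum_comm' (t' := Finset.range n) (s' := fun j => Finset.range (n - j))
      (by intro k j; simp only [Finset.mem_range]; omega)]
    refine (Finset.sum_congr rfl fun j _ => ?_).symm
    rw [← Finset.sum_smul]
    congr 1
    rw [hconv n j, Finset.mul_sum]
  -- span lemma
  have hspan : ∀ d (p : Polynomial ℂ), p.natDegree ≤ d →
      p ∈ Submodule.span ℂ (P '' {n | n ≤ d}) := by
    intro d
    induction d with
    | zero =>
      intro p hp
      have hP0 : P 0 = 1 := (hmonic 0).natDegree_eq_zero.mp (hdeg 0)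
      have : p = p.coeff 0 • P 0 := by
        rw [hP0, Polynomial.smul_eq_C_mul, mul_one]
        exact Polynomial.eq_C_of_natDegree_le_zero hp
      rw [this]
      exact Submodule.smul_mem _ _ (Submodule.subset_span ⟨0, by simp, rfl⟩)
    | succ d ih =>
      intro p hp
      set a := p.coeff (d + 1) with ha
      have hq : (p - a • P (d + 1)).natDegree ≤ d := by
        apply Polynomial.natDegree_le_iff_coeff_eq_zero.mpr
        intro m hm
        rw [Polynomial.coeff_sub, Polynomial.coeff_smul]
        rcases eq_or_lt_of_le (Nat.succ_le_of_lt hm) with h | h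
        · rw [← h]
          have hlc : (P (d + 1)).coeff (d + 1) = 1 := by
            have := (hmonic (d + 1)).leadingCoeff
            rwa [Polynomial.leadingCoeff, hdeg] at this
          rw [hlc, smul_eq_mul, mul_one, ← ha, sub_self]
        · have h1 : p.coeff m = 0 :=
            Polynomial.coeff_eq_zero_of_natDegree_lt (lt_of_le_of_lt hp h)
          have h2 : (P (d + 1)).coeff m = 0 :=
            Polynomial.coeff_eq_zero_of_natDegree_lt (by rw [hdeg]; exact h)
          rw [h1, h2, smul_zero, sub_zero]
      have hmem := ih _ hq
      have hrw : p = (p - a • P (d + 1)) + a • P (d + 1) := by ring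
      rw [hrw]
      refine Submodule.add_mem _ (Submodule.span_mono ?_ hmem)
        (Submodule.smul_mem _ _ (Submodule.subset_span ⟨d + 1, by simp, rfl⟩))
      rintro x ⟨n, hn, rfl⟩
      exact ⟨n, by simp only [Set.mem_setOf_eq] at hn ⊢; omega, rfl⟩
  -- conclusion
  intro p
  set d := p.natDegree with hd
  set T : Module.End ℂ (Polynomial ℂ) :=
    ∑ k ∈ Finset.range (d + 1), (PowerSeries.coeff (k + 1) u) • A ^ (k + 1) with hT
  have hTapp : ∀ q, T q = ∑ k ∈ Finset.range (d + 1),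
      (PowerSeries.coeff (k + 1) u) • ((A ^ (k + 1)) q) := by
    intro q
    rw [hT]
    simp [LinearMap.sum_apply, LinearMap.smul_apply]
  have hgoal : D p = T p := by
    have hmem := hspan d p le_rfl
    refine Submodule.span_induction ?_ ?_ ?_ ?_ hmem
    · rintro x ⟨n, hn, rfl⟩
      simp only [Set.mem_setOf_eq] at hn
      rw [key n (d + 1) (by omega), hTapp]
    · simp
    · intro x y _ _ hx hy
      rw [map_add, map_add, hx, hy]
    · intro r x _ hx
      rw [map_smul, map_smul, hx]
  rw [hgoal, hTapp]
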